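/- arXiv:2302.00324 — 4 statements merged into one kernel-verified Lean document; each statement's English description precedes it below -/
import Mathlib

section
/- Let k be a field and L = k[x]/(f) where f = x³ + a₂x² + a₁x + a₀ is a separable irreducible polynomial over k. Then the extension L/k is Galois if and only if there exists an automorphism σ ∈ Aut(L/k) of order 3 of the form σ(x) = (αx+β)/(γx+δ) with α,β,γ,δ ∈ k and αδ−βγ ≠ 0. -/
open Polynomial

/-- Let `k` be a field and `L = k[x]/(f)` where
`f = x³ + a₂x² + a₁x + a₀` is a separable irreducible polynomial over `k`.  Then `L/k` is
Galois if and only if there exists an automorphism `σ ∈ Aut(L/k)` of order `3` of the form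
`σ(x) = (αx+β)/(γx+δ)` with `α,β,γ,δ ∈ k` and `αδ − βγ ≠ 0`. -/
theorem stmt_4 {k : Type*} [Field k] (a₀ a₁ a₂ : k) (f : k[X])
    (hf : f = X ^ 3 + C a₂ * X ^ 2 + C a₁ * X + C a₀)
    (hsep : f.Separable) (hirr : Fact (Irreducible f)) :
    IsGalois k (AdjoinRoot f) ↔
      ∃ σ : AdjoinRoot f ≃ₐ[k] AdjoinRoot f, orderOf σ = 3 ∧
        ∃ α β γ δ : k, α * δ - β * γ ≠ 0 ∧
          σ (AdjoinRoot.root f) =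
            (algebraMap k (AdjoinRoot f) α * AdjoinRoot.root f + algebraMap k (AdjoinRoot f) β)
              / (algebraMap k (AdjoinRoot f) γ * AdjoinRoot.root f
                  + algebraMap k (AdjoinRoot f) δ) := by
  have hmonic : f.Monic := by rw [hf]; monicity!
  have hdeg : f.natDegree = 3 := by rw [hf]; compute_degree!
  have hf0 : f ≠ 0 := hirr.out.ne_zero
  set L := AdjoinRoot f
  set x := AdjoinRoot.root f with hxdef
  set A := algebraMap k L with hA
  haveI : FiniteDimensional k L := PowerBasis.finite (AdjoinRoot.powerBasis hf0)
  have hfinrank : Module.finrank k L = 3 := by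
    rw [PowerBasis.finrank (AdjoinRoot.powerBasis hf0), AdjoinRoot.powerBasis_dim, hdeg]
  have hmin : minpoly k x = f := by
    rw [AdjoinRoot.minpoly_root hf0, hmonic.leadingCoeff, inv_one, map_one, mul_one]
  have haf : (aeval x) f = 0 := by rw [AdjoinRoot.aeval_eq, AdjoinRoot.mk_self]
  have hx3 : x ^ 3 + A a₂ * x ^ 2 + A a₁ * x + A a₀ = 0 := by
    have h2 : (aeval x) (X ^ 3 + C a₂ * X ^ 2 + C a₁ * X + C a₀ : k[X]) = 0 := by
      rw [← hf]; exact haf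
    simpa [hA, L, AdjoinRoot.algebraMap_eq] using h2
  -- linear independence of 1, x, x²
  have indep : ∀ c₀ c₁ c₂ : k, A c₀ + A c₁ * x + A c₂ * x ^ 2 = 0 →
      c₀ = 0 ∧ c₁ = 0 ∧ c₂ = 0 := by
    intro c₀ c₁ c₂ h
    set p : k[X] := C c₀ + C c₁ * X + C c₂ * X ^ 2 with hp
    have hev : aeval x p = 0 := by simpa [hp, hA, L, AdjoinRoot.algebraMap_eq] using h
    have hpz : p = 0 := by
      by_contra hpne
      have h1 := minpoly.degree_le_of_ne_zero k x hpne hev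
      have hdp : degree p ≤ 2 := by rw [hp]; compute_degree
      rw [hmin, degree_eq_natDegree hf0, hdeg] at h1
      have : ((3 : ℕ) : WithBot ℕ) ≤ 2 := h1.trans hdp
      norm_num at this
    refine ⟨?_, ?_, ?_⟩
    · simpa [hp] using congrArg (fun q => Polynomial.coeff q 0) hpz
    · simpa [hp] using congrArg (fun q => Polynomial.coeff q 1) hpz
    · simpa [hp] using congrArg (fun q => Polynomial.coeff q 2) hpz
  have hxnot : ∀ c : k, x ≠ A c := by
    intro c h
    have h0 : A (-c) + A 1 * x + A 0 * x ^ 2 = 0 := by rw [h]; simp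
    exact one_ne_zero (indep _ _ _ h0).2.1
  have hσnot : ∀ (σ : L ≃ₐ[k] L) (c : k), σ x ≠ A c := by
    intro σ c h
    have h2 := congrArg σ.symm h
    rw [σ.symm_apply_apply] at h2
    exact hxnot c (h2.trans (σ.symm.commutes c))
  -- every element is a k-combination of 1, x, x²
  have repr : ∀ z : L, ∃ v0 v1 v2 : k, z = A v0 + A v1 * x + A v2 * x ^ 2 := by
    intro z
    obtain ⟨p, hp⟩ := AdjoinRoot.mk_surjective z
    set r : k[X] := p %ₘ f with hr
    have hrd : r.degree < ((3 : ℕ) : WithBot ℕ) := by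
      rw [← hdeg, ← degree_eq_natDegree hf0]
      exact degree_modByMonic_lt p hmonic
    have hcoeff : ∀ n, 3 ≤ n → r.coeff n = 0 := fun n hn =>
      coeff_eq_zero_of_degree_lt (hrd.trans_le (by exact_mod_cast hn))
    have hreq : r = C (r.coeff 0) + C (r.coeff 1) * X + C (r.coeff 2) * X ^ 2 := by
      ext n
      rcases n with _ | _ | _ | n
      · simp
      · simp
      · simp
      · simp [hcoeff (n + 3) (by omega)]
    have hmk : AdjoinRoot.mk f r = AdjoinRoot.mk f p := by
      rw [AdjoinRoot.mk_eq_mk]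
      exact ⟨-(p /ₘ f), by rw [hr]; linear_combination (p.modByMonic_add_div f)⟩
    refine ⟨r.coeff 0, r.coeff 1, r.coeff 2, ?_⟩
    rw [← hp, ← hmk, ← AdjoinRoot.aeval_eq]
    conv_lhs => rw [hreq]
    simp only [map_add, map_mul, map_pow, aeval_C, aeval_X]
    rfl
  constructor
  · -- Galois → exists σ
    intro hgal
    have hcard : Fintype.card (L ≃ₐ[k] L) = 3 := by
      rw [← Nat.card_eq_fintype_card, IsGalois.card_aut_eq_finrank, hfinrank]
    obtain ⟨σ, hσ1⟩ : ∃ σ : L ≃ₐ[k] L, σ ≠ 1 :=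
      Fintype.exists_ne_of_one_lt_card (by omega) 1
    have hord : orderOf σ = 3 := by
      have hdvd : orderOf σ ∣ 3 := hcard ▸ orderOf_dvd_card
      have h1 : orderOf σ ≠ 1 := by simpa [orderOf_eq_one_iff] using hσ1
      rcases (Nat.prime_three).eq_one_or_self_of_dvd _ hdvd with h | h
      · exact absurd h h1
      · exact h
    obtain ⟨v0, v1, v2, hσx⟩ := repr (σ x)
    set δ' : k := v2 * a₂ - v1 with hδ'
    set α' : k := v2 * (v0 - v2 * a₁) + δ' * v1 with hα'
    set β' : k := -(v2 * v2 * a₀) + δ' * v0 with hβ'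
    have hden : A v2 * x + A δ' ≠ 0 := by
      intro h0
      have h0' : A δ' + A v2 * x + A 0 * x ^ 2 = 0 := by
        rw [map_zero, zero_mul, add_zero, add_comm]; exact h0
      obtain ⟨hδ0, hγ0, -⟩ := indep _ _ _ h0'
      have hv1 : v1 = 0 := by rw [hδ', hγ0] at hδ0; linear_combination -hδ0
      exact hσnot σ v0 (by rw [hσx, hγ0, hv1]; simp)
    have hmul : σ x * (A v2 * x + A δ') = A α' * x + A β' := by
      rw [hσx, hα', hβ', hδ']
      simp only [map_add, map_mul, map_sub, map_neg]
      linear_combination (A v2) ^ 2 * hx3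
    have hdiv : σ x = (A α' * x + A β') / (A v2 * x + A δ') := by
      rw [eq_div_iff hden]; exact hmul
    have hnd : α' * δ' - β' * v2 ≠ 0 := by
      intro h
      rcases eq_or_ne v2 0 with hγ | hγ
      · have hδ0 : δ' ≠ 0 := by
          intro hδ0; apply hden; rw [hγ, hδ0]; simp
        have hα0 : α' = 0 := by
          rw [hγ, mul_zero, sub_zero] at h
          exact (mul_eq_zero.1 h).resolve_right hδ0
        apply hσnot σ (β' / δ')
        rw [hdiv, hγ, hα0]
        simp [map_div₀]
      · have hv2 : A v2 ≠ 0 := fun hc => hγ (by simpa using hc)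
        have hβγ : β' * v2 = α' * δ' := by linear_combination -h
        have hβγL : A β' * A v2 = A α' * A δ' := by
          rw [← map_mul, ← map_mul, hβγ]
        have h2 : A v2 * (σ x * (A v2 * x + A δ')) = A α' * (A v2 * x + A δ') := by
          rw [hmul]; linear_combination hβγL
        have h3 : (A v2 * σ x - A α') * (A v2 * x + A δ') = 0 := by
          linear_combination h2
        have h4 : A v2 * σ x - A α' = 0 :=
          (mul_eq_zero.1 h3).resolve_right hden
        apply hσnot σ (α' / v2)
        rw [map_div₀, eq_div_iff hv2]
        linear_combination h4
    exact ⟨σ, hord, α', β', v2, δ', hnd, hdiv⟩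
  · -- exists σ → Galois
    rintro ⟨σ, hord, -⟩
    have hdvd : 3 ∣ Fintype.card (L ≃ₐ[k] L) := hord ▸ orderOf_dvd_card
    have hle : Fintype.card (L ≃ₐ[k] L) ≤ 3 := by
      calc Fintype.card (L ≃ₐ[k] L) = Fintype.card (L →ₐ[k] L) :=
            Fintype.card_congr (algEquivEquivAlgHom k L).toEquiv
        _ ≤ Module.finrank L (L →ₗ[k] L) := finrank_algHom k L
        _ = Module.finrank k L := Module.finrank_linearMap_self k L L
        _ = 3 := hfinrank
    have hpos := Nat.le_of_dvd Fintype.card_pos hdvd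
    have hcard3 : Fintype.card (L ≃ₐ[k] L) = 3 := by omega
    apply IsGalois.of_card_aut_eq_finrank
    rw [hfinrank]
    exact Nat.card_eq_fintype_card.trans hcard3
end

section
/- Let k be a field, L = k[x]/(x³+a₂x²+a₁x+a₀) a Galois cubic extension of k with f separable and irreducible, and let σ be a generator of the Galois group sending x to ν₂x² + ν₁x + ν₀ with νᵢ ∈ k, ν₂ ≠ 0. Then σ(x) = (αx+β)/(γx+δ) where α = a₂ν₁ν₂ − a₁ν₂² + ν₀ν₂ − ν₁², β = a₂ν₀ν₂ − a₀ν₂² − ν₀ν₁, γ = ν₂, δ = a₂ν₂ − ν₁, and αδ − βγ ≠ 0. -/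
open Polynomial

/-- Let `L = k[x]/(f)` be a Galois cubic extension of `k`, where
`f = x³ + a₂x² + a₁x + a₀` is separable and irreducible, and let `σ` be a generator of the
Galois group (an automorphism of order `3`) sending the root `x` to `ν₂x² + ν₁x + ν₀` with
`ν₂ ≠ 0`.  Then `σ(x) = (αx+β)/(γx+δ)` where `α = a₂ν₁ν₂ − a₁ν₂² + ν₀ν₂ − ν₁²`,
`β = a₂ν₀ν₂ − a₀ν₂² − ν₀ν₁`, `γ = ν₂`, `δ = a₂ν₂ − ν₁`, and `αδ − βγ ≠ 0`. -/
theorem stmt_5 {k : Type*} [Field k] (a₀ a₁ a₂ ν₀ ν₁ ν₂ : k) (f : k[X])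
    (hf : f = X ^ 3 + C a₂ * X ^ 2 + C a₁ * X + C a₀)
    (hsep : f.Separable) (hirr : Fact (Irreducible f))
    (hGal : IsGalois k (AdjoinRoot f))
    (σ : AdjoinRoot f ≃ₐ[k] AdjoinRoot f) (hord : orderOf σ = 3)
    (hν₂ : ν₂ ≠ 0)
    (hσ : σ (AdjoinRoot.root f) =
      algebraMap k (AdjoinRoot f) ν₂ * AdjoinRoot.root f ^ 2 +
        algebraMap k (AdjoinRoot f) ν₁ * AdjoinRoot.root f +
        algebraMap k (AdjoinRoot f) ν₀) :
    (a₂ * ν₁ * ν₂ - a₁ * ν₂ ^ 2 + ν₀ * ν₂ - ν₁ ^ 2) * (a₂ * ν₂ - ν₁) -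
        (a₂ * ν₀ * ν₂ - a₀ * ν₂ ^ 2 - ν₀ * ν₁) * ν₂ ≠ 0 ∧
      σ (AdjoinRoot.root f) =
        (algebraMap k (AdjoinRoot f) (a₂ * ν₁ * ν₂ - a₁ * ν₂ ^ 2 + ν₀ * ν₂ - ν₁ ^ 2) *
            AdjoinRoot.root f +
          algebraMap k (AdjoinRoot f) (a₂ * ν₀ * ν₂ - a₀ * ν₂ ^ 2 - ν₀ * ν₁)) /
        (algebraMap k (AdjoinRoot f) ν₂ * AdjoinRoot.root f +
          algebraMap k (AdjoinRoot f) (a₂ * ν₂ - ν₁)) := by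
  set φ := algebraMap k (AdjoinRoot f) with hφ
  set x := AdjoinRoot.root f with hx
  have hfmonic : f.Monic := by rw [hf]; monicity!
  have hfne : f ≠ 0 := hfmonic.ne_zero
  have hdeg : f.natDegree = 3 := by rw [hf]; compute_degree!
  have hmin : minpoly k x = f := by
    rw [hx, AdjoinRoot.minpoly_root hfne, hfmonic.leadingCoeff, inv_one, map_one, mul_one]
  have hxk : ∀ c : k, x ≠ φ c := by
    intro c hc
    have h1 : minpoly k x = X - C c := hc ▸ minpoly.eq_X_sub_C (AdjoinRoot f) c
    have := h1 ▸ hmin ▸ hdeg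
    simp [natDegree_X_sub_C] at this
  have hφν₂ : φ ν₂ ≠ 0 := fun h => hν₂ ((_root_.map_eq_zero φ).mp h)
  -- the root equation
  have hroot : x ^ 3 + φ a₂ * x ^ 2 + φ a₁ * x + φ a₀ = 0 := by
    have h0 : aeval x (X ^ 3 + C a₂ * X ^ 2 + C a₁ * X + C a₀) = 0 := by
      rw [← hf, hx, AdjoinRoot.aeval_eq, AdjoinRoot.mk_self]
    simpa [map_add, map_mul, map_pow, aeval_C, hφ] using h0
  -- denominator nonzero
  have hden : φ ν₂ * x + φ (a₂ * ν₂ - ν₁) ≠ 0 := by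
    intro h
    apply hxk ((ν₁ - a₂ * ν₂) / ν₂)
    rw [map_div₀, eq_div_iff hφν₂]
    simp only [map_sub, map_mul] at h ⊢
    linear_combination h
  -- key identity
  have hkey : (φ ν₂ * x + φ (a₂ * ν₂ - ν₁)) * σ x =
      φ (a₂ * ν₁ * ν₂ - a₁ * ν₂ ^ 2 + ν₀ * ν₂ - ν₁ ^ 2) * x +
        φ (a₂ * ν₀ * ν₂ - a₀ * ν₂ ^ 2 - ν₀ * ν₁) := by
    rw [hσ]
    simp only [map_sub, map_add, map_mul, map_pow]
    linear_combination (φ ν₂) ^ 2 * hroot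
  have heq : σ x =
      (φ (a₂ * ν₁ * ν₂ - a₁ * ν₂ ^ 2 + ν₀ * ν₂ - ν₁ ^ 2) * x +
        φ (a₂ * ν₀ * ν₂ - a₀ * ν₂ ^ 2 - ν₀ * ν₁)) /
      (φ ν₂ * x + φ (a₂ * ν₂ - ν₁)) := by
    rw [eq_div_iff hden, mul_comm]
    exact hkey
  refine ⟨?_, heq⟩
  intro hdet
  set α := a₂ * ν₁ * ν₂ - a₁ * ν₂ ^ 2 + ν₀ * ν₂ - ν₁ ^ 2 with hα
  set β := a₂ * ν₀ * ν₂ - a₀ * ν₂ ^ 2 - ν₀ * ν₁ with hβ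
  have hdetφ := congrArg φ hdet
  simp only [map_sub, map_mul, map_zero] at hdetφ
  have h2 : φ ν₂ * (φ α * x + φ β) = φ α * (φ ν₂ * x + φ (a₂ * ν₂ - ν₁)) := by
    simp only [map_sub, map_mul] at hdetφ ⊢
    linear_combination -hdetφ
  have h3 : φ ν₂ * σ x = φ α := by
    have h4 : (φ ν₂ * x + φ (a₂ * ν₂ - ν₁)) * (φ ν₂ * σ x) =
        (φ ν₂ * x + φ (a₂ * ν₂ - ν₁)) * φ α := by
      rw [show (φ ν₂ * x + φ (a₂ * ν₂ - ν₁)) * (φ ν₂ * σ x)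
            = φ ν₂ * ((φ ν₂ * x + φ (a₂ * ν₂ - ν₁)) * σ x) by ring, hkey, h2]
      ring
    exact mul_left_cancel₀ hden h4
  have h5 : φ ν₂ * x = φ α := by
    have h6 := congrArg σ.symm h3
    simp only [map_mul, AlgEquiv.symm_apply_apply] at h6
    rwa [show φ ν₂ = algebraMap k (AdjoinRoot f) ν₂ from rfl,
      show φ α = algebraMap k (AdjoinRoot f) α from rfl,
      AlgEquiv.commutes, AlgEquiv.commutes] at h6
  apply hxk (α / ν₂)
  rw [map_div₀, eq_div_iff hφν₂]
  linear_combination h5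
end

section
/- Let k be a field containing a primitive fourth root of unity i. There exist no α, β, γ, δ ∈ k(t⁴) with αδ − βγ ≠ 0 such that it − it³ = (α(t+t³) + β)/(γ(t+t³) + δ) in k(t). -/
open Polynomial

namespace Stmt11

variable {k : Type*} [Field k]

noncomputable def tau (i : k) : k[X] →ₐ[k] k[X] := Polynomial.aeval (Polynomial.C i * Polynomial.X)

theorem tau_inj {i : k} (hi : i ≠ 0) : Function.Injective (tau i) := by
  have h : Function.LeftInverse (Polynomial.aeval (Polynomial.C i⁻¹ * Polynomial.X)) (tau i) := by
    intro p
    rw [tau, ← Polynomial.aeval_algHom_apply]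
    have : (Polynomial.aeval (R := k) (Polynomial.C i⁻¹ * Polynomial.X)) (Polynomial.C i * Polynomial.X) = Polynomial.X := by
      rw [map_mul, Polynomial.aeval_C, Polynomial.aeval_X, Polynomial.algebraMap_eq]
      rw [← mul_assoc, ← Polynomial.C_mul, mul_inv_cancel₀ hi, Polynomial.C_1, one_mul]
    rw [this, Polynomial.aeval_X_left_apply]
  exact h.injective

noncomputable def phi (i : k) : k[X] →ₐ[k] RatFunc k :=
  (IsScalarTower.toAlgHom k k[X] (RatFunc k)).comp (tau i)

theorem phi_inj {i : k} (hi : i ≠ 0) : Function.Injective (phi i) :=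
  (RatFunc.algebraMap_injective k).comp (tau_inj hi)

noncomputable def sig {i : k} (hi : i ≠ 0) : RatFunc k →ₐ[k] RatFunc k :=
  RatFunc.liftAlgHom (phi i)
    (nonZeroDivisors_le_comap_nonZeroDivisors_of_injective _ (phi_inj hi))

theorem sig_algebraMap {i : k} (hi : i ≠ 0) (p : k[X]) :
    sig hi (algebraMap k[X] (RatFunc k) p) = algebraMap k[X] (RatFunc k) (tau i p) := by
  have := RatFunc.liftAlgHom_apply_div' (phi i)
    (nonZeroDivisors_le_comap_nonZeroDivisors_of_injective _ (phi_inj hi)) p 1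
  simpa [sig, phi] using this

theorem sig_X {i : k} (hi : i ≠ 0) : sig hi (RatFunc.X) = RatFunc.C i * RatFunc.X := by
  rw [← RatFunc.algebraMap_X, sig_algebraMap hi]
  rw [tau, Polynomial.aeval_X]
  rw [map_mul, RatFunc.algebraMap_C, RatFunc.algebraMap_X]

theorem sig_C {i : k} (hi : i ≠ 0) (a : k) : sig hi (RatFunc.C a) = RatFunc.C a := by
  rw [← RatFunc.algebraMap_eq_C]
  exact (sig hi).commutes a

end Stmt11

/-- Let `k` be a field containing a primitive fourth root of unity `i`.
There exist no `α, β, γ, δ ∈ k(t⁴)` with `αδ − βγ ≠ 0` such that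
`it − it³ = (α(t+t³) + β)/(γ(t+t³) + δ)` in `k(t)`: the Galois automorphism `t ↦ it` of
`k(t)/k(t⁴)` is not a fractional-linear transformation over `k(t⁴)` of `x = t + t³`. -/
theorem stmt_11 {k : Type*} [Field k] (i : k) (hi : IsPrimitiveRoot i 4)
    (F : IntermediateField k (RatFunc k))
    (hF : F = IntermediateField.adjoin k {(RatFunc.X : RatFunc k) ^ 4}) :
    ¬ ∃ α β γ δ : RatFunc k, α ∈ F ∧ β ∈ F ∧ γ ∈ F ∧ δ ∈ F ∧
        α * δ - β * γ ≠ 0 ∧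
        RatFunc.C i * RatFunc.X - RatFunc.C i * RatFunc.X ^ 3 =
          (α * (RatFunc.X + RatFunc.X ^ 3) + β) /
            (γ * (RatFunc.X + RatFunc.X ^ 3) + δ) := by
  subst hF
  rintro ⟨α, β, γ, δ, hα, hβ, hγ, hδ, hdet, heq⟩
  -- basic facts about i
  have hi4 : i ^ 4 = 1 := hi.pow_eq_one
  have hi0 : i ≠ 0 := by
    intro h; rw [h] at hi4; simp at hi4
  have hi2 : i ^ 2 = -1 := (hi.pow (by norm_num) (by norm_num : (4:ℕ) = 2 * 2)).eq_neg_one_of_two_right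
  have h2k : (2 : k) ≠ 0 := by
    intro h
    have h1 : (-1 : k) = 1 := by linear_combination -h
    have : (4 : ℕ) ∣ 2 := hi.dvd_of_pow_eq_one 2 (by rw [hi2, h1])
    norm_num at this
  -- the automorphism
  set σ := Stmt11.sig hi0 with hσdef
  have hσX : σ RatFunc.X = RatFunc.C i * RatFunc.X := Stmt11.sig_X hi0
  have hC2 : (RatFunc.C i) ^ 2 = -1 := by
    rw [← map_pow, hi2, map_neg, map_one]
  have hC4 : (RatFunc.C i) ^ 4 = 1 := by
    rw [← map_pow, hi4, map_one]
  have hfix : ∀ f ∈ IntermediateField.adjoin k {(RatFunc.X : RatFunc k) ^ 4}, σ f = f := by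
    intro f hf
    induction hf using IntermediateField.adjoin_induction with
    | mem x hx =>
      rw [Set.mem_singleton_iff] at hx
      rw [hx, map_pow, hσX, mul_pow, hC4, one_mul]
    | algebraMap x => exact σ.commutes x
    | add x y _ _ hx hy => rw [map_add, hx, hy]
    | inv x _ hx => rw [map_inv₀, hx]
    | mul x y _ _ hx hy => rw [map_mul, hx, hy]
  have hfα := hfix α hα
  have hfβ := hfix β hβ
  have hfγ := hfix γ hγ
  have hfδ := hfix δ hδ
  set x : RatFunc k := RatFunc.X + RatFunc.X ^ 3 with hxdef
  set y : RatFunc k := RatFunc.C i * RatFunc.X - RatFunc.C i * RatFunc.X ^ 3 with hydef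
  have hσx : σ x = y := by
    rw [hxdef, hydef, map_add, map_pow, hσX]
    linear_combination RatFunc.X ^ 3 * RatFunc.C i * hC2
  have hσy : σ y = -x := by
    rw [hydef, hxdef, map_sub, map_mul, map_mul, map_pow, hσX, Stmt11.sig_C hi0]
    linear_combination RatFunc.X * hC2 - RatFunc.X ^ 3 * hC4
  -- nonzero facts
  have hx0 : x ≠ 0 := by
    have hxalg : x = algebraMap k[X] (RatFunc k) (Polynomial.X + Polynomial.X ^ 3) := by
      rw [map_add, map_pow, RatFunc.algebraMap_X]
    rw [hxalg]
    intro h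
    have := (RatFunc.algebraMap_injective k) (by rw [h, map_zero] : algebraMap k[X] (RatFunc k) (Polynomial.X + Polynomial.X ^ 3) = algebraMap k[X] (RatFunc k) 0)
    have h1 := congrArg (fun p => Polynomial.coeff p 1) this
    simp [Polynomial.coeff_X_pow] at h1
  have hσinj : Function.Injective σ := σ.toRingHom.injective
  have hy0 : y ≠ 0 := by
    rw [← hσx]
    intro h
    exact hx0 (hσinj (by rw [h, map_zero]))
  have h2 : (2 : RatFunc k) ≠ 0 := fun h =>
    h2k ((algebraMap k (RatFunc k)).injective (by rw [map_ofNat, map_zero, h]))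
  have h4 : (4 : RatFunc k) ≠ 0 := by
    intro h
    apply h2
    have h22 : (2 : RatFunc k) * 2 = 0 := by rw [← h]; norm_num
    exact mul_self_eq_zero.mp h22
  have hX0 : (RatFunc.X : RatFunc k) ≠ 0 := RatFunc.X_ne_zero
  have hxy2 : x ^ 2 + y ^ 2 = 4 * RatFunc.X ^ 4 := by
    rw [hxdef, hydef]
    linear_combination (RatFunc.X ^ 2 - 2 * RatFunc.X ^ 4 + RatFunc.X ^ 6) * hC2
  have hxy2ne : x ^ 2 + y ^ 2 ≠ 0 := by
    rw [hxy2]; exact mul_ne_zero h4 (pow_ne_zero _ hX0)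
  -- the main functional equation
  by_cases hd : γ * x + δ = 0
  · rw [hd, div_zero] at heq; exact hy0 heq
  rw [eq_div_iff hd] at heq
  have E2 := congrArg σ heq
  simp only [map_mul, map_add, hσx, hσy, hfα, hfβ, hfγ, hfδ] at E2
  have E3 := congrArg σ E2
  simp only [map_mul, map_add, map_neg, hσx, hσy, hfα, hfβ, hfγ, hfδ, neg_neg] at E3
  have E4 := congrArg σ E3
  simp only [map_mul, map_add, map_neg, hσx, hσy, hfα, hfβ, hfγ, hfδ, neg_neg] at E4
  -- now pure algebra
  have hb : (4 : RatFunc k) * β = 0 := by linear_combination -heq - E2 - E3 - E4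
  have hβ0 : β = 0 := by
    rcases mul_eq_zero.mp hb with h | h
    · exact (h4 h).elim
    · exact h
  have hg : γ * (x * y) * 2 = 0 := by linear_combination heq + E3 + 2 * hβ0
  have hγ0 : γ = 0 := by
    by_contra hne
    exact mul_ne_zero (mul_ne_zero hne (mul_ne_zero hx0 hy0)) h2 hg
  have ha : α * (x ^ 2 + y ^ 2) * 2 = 0 := by
    linear_combination (-x) * heq - y * E2 + x * E3 + y * E4
  have hα0 : α = 0 := by
    by_contra hne
    exact mul_ne_zero (mul_ne_zero hne hxy2ne) h2 ha
  have hdd : δ * y = 0 := by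
    linear_combination heq - (x * y) * hγ0 + x * hα0 + hβ0
  have hδ0 : δ = 0 := by
    by_contra hne
    exact mul_ne_zero hne hy0 hdd
  exact hdet (by rw [hα0, hβ0]; ring)
end

section
/- Let k be a field with char(k) ≠ 5 containing a primitive fifth root of unity ζ ≠ 1. There is no matrix A ∈ GL₃(k) (up to scalar) such that A·[ζuv⁶ − ζ²u⁷ : u⁵(ζ²u²+v²) : v⁵(ζ²u²+v²)]ᵀ = λ·[uv⁶ − u⁷ : u⁵(u²+v²) : v⁵(u²+v²)]ᵀ as polynomial identities in u, v for some nonzero scalar λ. -/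
open MvPolynomial

/-- Let `k` be a field with `char k ≠ 5` containing a primitive fifth root
of unity `ζ ≠ 1`.  There is no invertible `3×3` matrix `A` over `k` and nonzero scalar `λ`
with `A · (φ ∘ σ) = λ·φ` as polynomial identities in `u, v`, where
`φ = [uv⁶ − u⁷ : u⁵(u²+v²) : v⁵(u²+v²)]` and `φ ∘ σ = [ζuv⁶ − ζ²u⁷ : u⁵(ζ²u²+v²) : v⁵(ζ²u²+v²)]`
(`σ : [u:v] ↦ [ζu : v]`): no linear automorphism of `ℙ²` extends the Galois automorphism. -/
theorem stmt_17 {k : Type*} [Field k] (hchar : (5 : k) ≠ 0)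
    (ζ : k) (hζ : IsPrimitiveRoot ζ 5) (hζ1 : ζ ≠ 1)
    (φ ψ : Fin 3 → MvPolynomial (Fin 2) k)
    (hφ : φ = ![X 0 * X 1 ^ 6 - X 0 ^ 7,
                X 0 ^ 5 * (X 0 ^ 2 + X 1 ^ 2),
                X 1 ^ 5 * (X 0 ^ 2 + X 1 ^ 2)])
    (hψ : ψ = ![C ζ * (X 0 * X 1 ^ 6) - C (ζ ^ 2) * X 0 ^ 7,
                X 0 ^ 5 * (C (ζ ^ 2) * X 0 ^ 2 + X 1 ^ 2),
                X 1 ^ 5 * (C (ζ ^ 2) * X 0 ^ 2 + X 1 ^ 2)]) :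
    ¬ ∃ (A : Matrix (Fin 3) (Fin 3) k) (lam : k), A.det ≠ 0 ∧ lam ≠ 0 ∧
        ∀ i : Fin 3, (∑ j : Fin 3, C (A i j) * ψ j) = C lam * φ i := by
  rintro ⟨A, lam, -, hlam, h⟩
  have h2 := h 2
  rw [hφ, hψ, Fin.sum_univ_three] at h2
  simp only [Matrix.cons_val_zero, Matrix.cons_val_one, Matrix.head_cons, Matrix.cons_val_two,
    Matrix.tail_cons] at h2
  have e := congrArg (aeval ![Polynomial.X, (1 : Polynomial k)]) h2
  simp only [map_add, map_mul, map_sub, map_pow, aeval_X, aeval_C, Matrix.cons_val_zero,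
    Matrix.cons_val_one, Matrix.head_cons, one_pow, mul_one, one_mul] at e
  rw [show (algebraMap k (Polynomial k)) = Polynomial.C from rfl] at e
  ring_nf at e
  have c2 := congrArg (Polynomial.coeff · 2) e
  have c0 := congrArg (Polynomial.coeff · 0) e
  simp only [← Polynomial.C_pow, ← Polynomial.C_mul, Polynomial.coeff_add, Polynomial.coeff_sub,
    Polynomial.coeff_C_mul, Polynomial.coeff_mul_C, Polynomial.coeff_C, Polynomial.coeff_X,
    Polynomial.coeff_X_pow] at c2 c0
  norm_num at c2 c0
  have : ζ ^ 2 = 1 := by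
    rw [c0] at c2
    exact mul_right_cancel₀ hlam (by rw [one_mul]; exact c2)
  have h5 : (5 : ℕ) ∣ 2 := hζ.dvd_of_pow_eq_one 2 this
  omega
end
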